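/- Let G be a group with endomorphism F, surjective Lang map on G, and F-stable subgroup H with F(H)=H. With τ : N_G(H) → Y^F/∼ as above (y ↦ class of xHx⁻¹ where x⁻¹F(x) = y), two elements y, y' ∈ N_G(H) satisfy τ(y) = τ(y') if and only if y' = y₁⁻¹·y·F(y₁) for some y₁ ∈ N_G(H). Hence τ induces a bijection cl'(N_G(H)) → Y^F/∼ between F-twisted conjugacy classes of N_G(H) and G^F-orbits of F-stable conjugates of H. -/

import Mathlib

/-- The conjugate subgroup `g K g⁻¹`. -/
def conjSub {G : Type*} [Group G] (g : G) (K : Subgroup G) : Subgroup G :=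
  Subgroup.map (MulAut.conj g).toMonoidHom K

lemma mem_conjSub {G : Type*} [Group G] {g x : G} {K : Subgroup G} :
    x ∈ conjSub g K ↔ g⁻¹ * x * g ∈ K := by
  constructor
  · rintro ⟨h, hh, rfl⟩
    simpa [mul_assoc] using hh
  · intro hx
    exact ⟨g⁻¹ * x * g, hx, by simp [mul_assoc]⟩

lemma conjSub_conjSub {G : Type*} [Group G] (a b : G) (K : Subgroup G) :
    conjSub a (conjSub b K) = conjSub (a * b) K := by
  ext x
  simp only [mem_conjSub, mul_inv_rev]
  constructor <;> intro h <;> simpa [mul_assoc] using h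

lemma conjSub_eq_self_iff {G : Type*} [Group G] {g : G} {H : Subgroup G} :
    conjSub g H = H ↔ g ∈ Subgroup.normalizer (H : Set G) := by
  rw [Subgroup.mem_normalizer_iff]
  constructor
  · intro h n
    constructor
    · intro hn
      have : g * n * g⁻¹ ∈ conjSub g H := mem_conjSub.2 (by simpa [mul_assoc] using hn)
      rwa [h] at this
    · intro hn
      have : g * n * g⁻¹ ∈ conjSub g H := by rw [h]; exact hn
      have := mem_conjSub.1 this
      simpa [mul_assoc] using this
  · intro h
    ext n
    rw [mem_conjSub]
    constructor
    · intro hn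
      have := (h (g⁻¹ * n * g)).1 hn
      simpa [mul_assoc] using this
    · intro hn
      exact (h (g⁻¹ * n * g)).2 (by simpa [mul_assoc] using hn)

/-- paper 1.5(a): `τ(y) = τ(y')` iff `y` and `y'` are `F`-twisted
conjugate in `N_G(H)`; hence `τ` induces a bijection `cl'(N_G(H)) → Y^F/∼`. -/
theorem tau_fibers_are_twisted_classes {G : Type*} [Group G] (F : G →* G)
    (hLang : Function.Surjective fun y : G => y⁻¹ * F y)
    (H : Subgroup G) (hFH : Subgroup.map F H = H)
    (y y' x x' : G) (hy : y ∈ Subgroup.normalizer (H : Set G)) (hy' : y' ∈ Subgroup.normalizer (H : Set G))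
    (hx : x⁻¹ * F x = y) (hx' : x'⁻¹ * F x' = y') :
    (∃ g : G, F g = g ∧ conjSub x' H = conjSub g (conjSub x H)) ↔
      ∃ y₁ ∈ Subgroup.normalizer (H : Set G), y' = y₁⁻¹ * y * F y₁ := by
  have hFx : F x = x * y := by rw [← hx]; group
  have hFx' : F x' = x' * y' := by rw [← hx']; group
  constructor
  · rintro ⟨g, hg, heq⟩
    rw [conjSub_conjSub] at heq
    set y₁ : G := (g * x)⁻¹ * x' with hy₁
    have hnorm : y₁ ∈ Subgroup.normalizer (H : Set G) := by
      rw [← conjSub_eq_self_iff]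
      have h2 : conjSub ((g*x)⁻¹) (conjSub x' H) = conjSub ((g*x)⁻¹) (conjSub (g*x) H) := by
        rw [heq]
      rw [conjSub_conjSub, conjSub_conjSub] at h2
      have h3 : (g*x)⁻¹ * (g*x) = (1:G) := by group
      rw [h3] at h2
      rw [h2]
      ext n
      simp [mem_conjSub]
    refine ⟨y₁, hnorm, ?_⟩
    have hFy₁ : F y₁ = (x * y)⁻¹ * g⁻¹ * (x' * y') := by
      rw [hy₁, mul_inv_rev, map_mul, map_mul, map_inv, map_inv, hg, hFx, hFx']
    rw [hFy₁, hy₁]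
    group
  · rintro ⟨y₁, hy₁, rfl⟩
    refine ⟨x' * y₁⁻¹ * x⁻¹, ?_, ?_⟩
    · have h1 : F (x' * y₁⁻¹ * x⁻¹) = x' * (y₁⁻¹ * y * F y₁) * (F y₁)⁻¹ * (x * y)⁻¹ := by
        rw [map_mul, map_mul, map_inv, map_inv, hFx, hFx']
      rw [h1]; group
    · rw [conjSub_conjSub]
      have h1 : x' * y₁⁻¹ * x⁻¹ * x = x' * y₁⁻¹ := by group
      rw [h1, ← conjSub_conjSub, conjSub_eq_self_iff.2 ((Subgroup.normalizer (H : Set G)).inv_mem hy₁)]
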